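/- arXiv:1701.07050 — 2 statements merged into one kernel-verified Lean document; each statement's English description precedes it below -/
import Mathlib

section
/- (Invariance-based representation of exogeneity statistics.) Under the rank condition, suppose y = Yβ + X₁γ + V·a + σ·ε for some β ∈ ℝ^G, γ ∈ ℝ^{k₁}, a ∈ ℝ^G, a T×G real matrix V, real σ ≠ 0, and ε ∈ ℝ^T. Set ā := a/σ and y*⊥(ā) := M₁(V − Y)·ā + M₁·ε. Then C₁y = σ·C₁y*⊥(ā), yᵀΨ₀y = σ²·y*⊥(ā)ᵀΨ₀y*⊥(ā), yᵀΛ_ly = σ²·y*⊥(ā)ᵀΛ_ly*⊥(ā) for l = 1, 2, 3, 4, yᵀΨ_Ry = σ²·y*⊥(ā)ᵀΨ_Ry*⊥(ā), and yᵀΛ_Ry = σ²·y*⊥(ā)ᵀΛ_Ry*⊥(ā); consequently, whenever the relevant denominator is nonzero, every exogeneity-statistic ratio computed from y equals the corresponding ratio computed from y*⊥(ā), so the statistics depend on a only through the shift M₁(V − Y)ā. -/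
set_option maxHeartbeats 1000000


open Matrix

variable {T G k₁ k₂ : ℕ}

/-- Orthogonal projection `P̄[A] = A(AᵀA)⁻¹Aᵀ` onto the column space of `A`. -/
noncomputable def projM {n : Type*} [Fintype n] [DecidableEq n]
    (A : Matrix (Fin T) n ℝ) : Matrix (Fin T) (Fin T) ℝ :=
  A * (Aᵀ * A)⁻¹ * Aᵀ

/-- The annihilator `M̄[A] = I - P̄[A]`. -/
noncomputable def annM {n : Type*} [Fintype n] [DecidableEq n]
    (A : Matrix (Fin T) n ℝ) : Matrix (Fin T) (Fin T) ℝ :=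
  1 - projM A

noncomputable def M1 (X₁ : Matrix (Fin T) (Fin k₁) ℝ) : Matrix (Fin T) (Fin T) ℝ :=
  annM X₁

noncomputable def Pm (X₁ : Matrix (Fin T) (Fin k₁) ℝ) (X₂ : Matrix (Fin T) (Fin k₂) ℝ) :
    Matrix (Fin T) (Fin T) ℝ :=
  projM (fromCols X₁ X₂)

noncomputable def Mm (X₁ : Matrix (Fin T) (Fin k₁) ℝ) (X₂ : Matrix (Fin T) (Fin k₂) ℝ) :
    Matrix (Fin T) (Fin T) ℝ :=
  annM (fromCols X₁ X₂)

noncomputable def N1 (X₁ : Matrix (Fin T) (Fin k₁) ℝ) (X₂ : Matrix (Fin T) (Fin k₂) ℝ) :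
    Matrix (Fin T) (Fin T) ℝ :=
  M1 X₁ * Pm X₁ X₂

noncomputable def B1 (Y : Matrix (Fin T) (Fin G) ℝ) (X₁ : Matrix (Fin T) (Fin k₁) ℝ) :
    Matrix (Fin G) (Fin T) ℝ :=
  (Yᵀ * M1 X₁ * Y)⁻¹ * (Yᵀ * M1 X₁)

noncomputable def B2 (Y : Matrix (Fin T) (Fin G) ℝ) (X₁ : Matrix (Fin T) (Fin k₁) ℝ)
    (X₂ : Matrix (Fin T) (Fin k₂) ℝ) : Matrix (Fin G) (Fin T) ℝ :=
  (Yᵀ * N1 X₁ X₂ * Y)⁻¹ * (Yᵀ * N1 X₁ X₂)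

noncomputable def C1 (Y : Matrix (Fin T) (Fin G) ℝ) (X₁ : Matrix (Fin T) (Fin k₁) ℝ)
    (X₂ : Matrix (Fin T) (Fin k₂) ℝ) : Matrix (Fin G) (Fin T) ℝ :=
  B2 Y X₁ X₂ - B1 Y X₁

/-- OLS estimator `β̂`. -/
noncomputable def betaOLS (y : Fin T → ℝ) (Y : Matrix (Fin T) (Fin G) ℝ)
    (X₁ : Matrix (Fin T) (Fin k₁) ℝ) : Fin G → ℝ :=
  B1 Y X₁ *ᵥ y

/-- 2SLS estimator `β̃`. -/
noncomputable def beta2S (y : Fin T → ℝ) (Y : Matrix (Fin T) (Fin G) ℝ)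
    (X₁ : Matrix (Fin T) (Fin k₁) ℝ) (X₂ : Matrix (Fin T) (Fin k₂) ℝ) : Fin G → ℝ :=
  B2 Y X₁ X₂ *ᵥ y

noncomputable def OmIV (Y : Matrix (Fin T) (Fin G) ℝ) (X₁ : Matrix (Fin T) (Fin k₁) ℝ)
    (X₂ : Matrix (Fin T) (Fin k₂) ℝ) : Matrix (Fin G) (Fin G) ℝ :=
  (T : ℝ)⁻¹ • (Yᵀ * N1 X₁ X₂ * Y)

noncomputable def OmLS (Y : Matrix (Fin T) (Fin G) ℝ) (X₁ : Matrix (Fin T) (Fin k₁) ℝ) :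
    Matrix (Fin G) (Fin G) ℝ :=
  (T : ℝ)⁻¹ • (Yᵀ * M1 X₁ * Y)

noncomputable def SigV (Y : Matrix (Fin T) (Fin G) ℝ) (X₁ : Matrix (Fin T) (Fin k₁) ℝ)
    (X₂ : Matrix (Fin T) (Fin k₂) ℝ) : Matrix (Fin G) (Fin G) ℝ :=
  (T : ℝ)⁻¹ • (Yᵀ * Mm X₁ X₂ * Y)

noncomputable def Dhat (Y : Matrix (Fin T) (Fin G) ℝ) (X₁ : Matrix (Fin T) (Fin k₁) ℝ)
    (X₂ : Matrix (Fin T) (Fin k₂) ℝ) : Matrix (Fin G) (Fin G) ℝ :=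
  (OmIV Y X₁ X₂)⁻¹ - (OmLS Y X₁)⁻¹

noncomputable def Psi0 (Y : Matrix (Fin T) (Fin G) ℝ) (X₁ : Matrix (Fin T) (Fin k₁) ℝ)
    (X₂ : Matrix (Fin T) (Fin k₂) ℝ) : Matrix (Fin T) (Fin T) ℝ :=
  (C1 Y X₁ X₂)ᵀ * (Dhat Y X₁ X₂)⁻¹ * C1 Y X₁ X₂

noncomputable def N2 (Y : Matrix (Fin T) (Fin G) ℝ) (X₁ : Matrix (Fin T) (Fin k₁) ℝ)
    (X₂ : Matrix (Fin T) (Fin k₂) ℝ) : Matrix (Fin T) (Fin T) ℝ :=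
  1 - M1 X₁ * Y * B2 Y X₁ X₂

noncomputable def Lam1 (Y : Matrix (Fin T) (Fin G) ℝ) (X₁ : Matrix (Fin T) (Fin k₁) ℝ)
    (X₂ : Matrix (Fin T) (Fin k₂) ℝ) : Matrix (Fin T) (Fin T) ℝ :=
  (T : ℝ)⁻¹ • (N1 X₁ X₂ * annM (N1 X₁ X₂ * Y) * N1 X₁ X₂)

noncomputable def Lam2 (Y : Matrix (Fin T) (Fin G) ℝ) (X₁ : Matrix (Fin T) (Fin k₁) ℝ)
    (X₂ : Matrix (Fin T) (Fin k₂) ℝ) : Matrix (Fin T) (Fin T) ℝ :=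
  M1 X₁ * ((T : ℝ)⁻¹ • annM (M1 X₁ * Y) - Psi0 Y X₁ X₂) * M1 X₁

noncomputable def Lam3 (Y : Matrix (Fin T) (Fin G) ℝ) (X₁ : Matrix (Fin T) (Fin k₁) ℝ)
    (X₂ : Matrix (Fin T) (Fin k₂) ℝ) : Matrix (Fin T) (Fin T) ℝ :=
  (T : ℝ)⁻¹ • (M1 X₁ * (N2 Y X₁ X₂)ᵀ * N2 Y X₁ X₂ * M1 X₁)

noncomputable def Lam4 (Y : Matrix (Fin T) (Fin G) ℝ) (X₁ : Matrix (Fin T) (Fin k₁) ℝ) :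
    Matrix (Fin T) (Fin T) ℝ :=
  (T : ℝ)⁻¹ • (M1 X₁ * annM (M1 X₁ * Y) * M1 X₁)

def Ybar (Y : Matrix (Fin T) (Fin G) ℝ) (X₁ : Matrix (Fin T) (Fin k₁) ℝ) :
    Matrix (Fin T) (Fin G ⊕ Fin k₁) ℝ :=
  fromCols Y X₁

def Zfull (Y : Matrix (Fin T) (Fin G) ℝ) (X₁ : Matrix (Fin T) (Fin k₁) ℝ)
    (X₂ : Matrix (Fin T) (Fin k₂) ℝ) : Matrix (Fin T) (Fin G ⊕ (Fin k₁ ⊕ Fin k₂)) ℝ :=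
  fromCols Y (fromCols X₁ X₂)

noncomputable def PsiR (Y : Matrix (Fin T) (Fin G) ℝ) (X₁ : Matrix (Fin T) (Fin k₁) ℝ)
    (X₂ : Matrix (Fin T) (Fin k₂) ℝ) : Matrix (Fin T) (Fin T) ℝ :=
  (T : ℝ)⁻¹ • (annM (Ybar Y X₁) - annM (Zfull Y X₁ X₂))

noncomputable def LamR (Y : Matrix (Fin T) (Fin G) ℝ) (X₁ : Matrix (Fin T) (Fin k₁) ℝ)
    (X₂ : Matrix (Fin T) (Fin k₂) ℝ) : Matrix (Fin T) (Fin T) ℝ :=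
  (T : ℝ)⁻¹ • annM (Zfull Y X₁ X₂)

/-- `σ̂² = (1/T)(y−Yβ̂)ᵀM₁(y−Yβ̂)`. -/
noncomputable def sigHat2 (y : Fin T → ℝ) (Y : Matrix (Fin T) (Fin G) ℝ)
    (X₁ : Matrix (Fin T) (Fin k₁) ℝ) : ℝ :=
  (T : ℝ)⁻¹ * ((y - Y *ᵥ betaOLS y Y X₁) ⬝ᵥ (M1 X₁ *ᵥ (y - Y *ᵥ betaOLS y Y X₁)))

/-- `σ̃² = (1/T)(y−Yβ̃)ᵀM₁(y−Yβ̃)`. -/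
noncomputable def sigTil2 (y : Fin T → ℝ) (Y : Matrix (Fin T) (Fin G) ℝ)
    (X₁ : Matrix (Fin T) (Fin k₁) ℝ) (X₂ : Matrix (Fin T) (Fin k₂) ℝ) : ℝ :=
  (T : ℝ)⁻¹ * ((y - Y *ᵥ beta2S y Y X₁ X₂) ⬝ᵥ (M1 X₁ *ᵥ (y - Y *ᵥ beta2S y Y X₁ X₂)))

/-- `σ̃₁² = (1/T)(y−Yβ̃)ᵀN₁(y−Yβ̃)`. -/
noncomputable def sigTil1sq (y : Fin T → ℝ) (Y : Matrix (Fin T) (Fin G) ℝ)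
    (X₁ : Matrix (Fin T) (Fin k₁) ℝ) (X₂ : Matrix (Fin T) (Fin k₂) ℝ) : ℝ :=
  (T : ℝ)⁻¹ * ((y - Y *ᵥ beta2S y Y X₁ X₂) ⬝ᵥ (N1 X₁ X₂ *ᵥ (y - Y *ᵥ beta2S y Y X₁ X₂)))

/-- `σ̃₂² = σ̂² − (β̃−β̂)ᵀΔ̂⁻¹(β̃−β̂)`. -/
noncomputable def sigTil2sq (y : Fin T → ℝ) (Y : Matrix (Fin T) (Fin G) ℝ)
    (X₁ : Matrix (Fin T) (Fin k₁) ℝ) (X₂ : Matrix (Fin T) (Fin k₂) ℝ) : ℝ :=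
  sigHat2 y Y X₁ -
    (beta2S y Y X₁ X₂ - betaOLS y Y X₁) ⬝ᵥ
      ((Dhat Y X₁ X₂)⁻¹ *ᵥ (beta2S y Y X₁ X₂ - betaOLS y Y X₁))

/-- The rank condition: `X₁`, `X = [X₁, X₂]`, `[Y, X]` and `[P̄[X]Y, X₁]` all have
full column rank. -/
def RankCond (Y : Matrix (Fin T) (Fin G) ℝ) (X₁ : Matrix (Fin T) (Fin k₁) ℝ)
    (X₂ : Matrix (Fin T) (Fin k₂) ℝ) : Prop :=
  X₁.rank = k₁ ∧ (fromCols X₁ X₂).rank = k₁ + k₂ ∧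
    (fromCols Y (fromCols X₁ X₂)).rank = G + (k₁ + k₂) ∧
    (fromCols (Pm X₁ X₂ * Y) X₁).rank = G + k₁

section Aux
variable {m n : Type*} [Fintype m] [Fintype n] [DecidableEq n]

lemma mulVec_inj_of_rank (A : Matrix m n ℝ) (h : A.rank = Fintype.card n) :
    Function.Injective A.mulVec := by
  have hker : LinearMap.ker A.mulVecLin = ⊥ := by
    have h1 := LinearMap.finrank_range_add_finrank_ker A.mulVecLin
    rw [show Module.finrank ℝ (LinearMap.range A.mulVecLin) = A.rank from rfl] at h1
    rw [h, Module.finrank_fintype_fun_eq_card] at h1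
    have : Module.finrank ℝ (LinearMap.ker A.mulVecLin) = 0 := by omega
    exact Submodule.finrank_eq_zero.mp this
  have := LinearMap.ker_eq_bot.mp hker
  simpa [Function.Injective] using this

lemma mulVec_inj_of_ker (B : Matrix m n ℝ) (h : ∀ v, B *ᵥ v = 0 → v = 0) :
    Function.Injective B.mulVec := fun x z hxz =>
  sub_eq_zero.mp (h (x - z) (by rw [mulVec_sub, hxz, sub_self]))

lemma mulVec_eq_zero_of_inj (B : Matrix m n ℝ) (hB : Function.Injective B.mulVec)
    {v : n → ℝ} (h : B *ᵥ v = 0) : v = 0 := by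
  apply hB; rw [h, mulVec_zero]

lemma isUnit_gram_of_inj (B : Matrix m n ℝ) (hB : Function.Injective B.mulVec) :
    IsUnit (Bᵀ * B) := by
  rw [← mulVec_injective_iff_isUnit]
  apply mulVec_inj_of_ker
  intro v hv
  have h1 : (B *ᵥ v) ⬝ᵥ (B *ᵥ v) = 0 := by
    rw [dotProduct_mulVec, ← mulVec_transpose, mulVec_mulVec, hv, zero_dotProduct]
  exact mulVec_eq_zero_of_inj B hB ((dotProduct_self_eq_zero).mp h1)

end Aux

section Proj
variable {n : Type*} [Fintype n] [DecidableEq n]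

lemma projM_transpose (A : Matrix (Fin T) n ℝ) : (projM A)ᵀ = projM A := by
  unfold projM
  rw [transpose_mul, transpose_mul, transpose_transpose, transpose_nonsing_inv, transpose_mul,
    transpose_transpose, Matrix.mul_assoc]

lemma annM_transpose (A : Matrix (Fin T) n ℝ) : (annM A)ᵀ = annM A := by
  unfold annM; rw [transpose_sub, transpose_one, projM_transpose]

lemma projM_mul_self (A : Matrix (Fin T) n ℝ) (h : IsUnit (Aᵀ * A)) : projM A * A = A := by
  unfold projM
  simp only [Matrix.mul_assoc]
  rw [nonsing_inv_mul _ ((isUnit_iff_isUnit_det _).mp h), Matrix.mul_one]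

lemma annM_mul_self (A : Matrix (Fin T) n ℝ) (h : IsUnit (Aᵀ * A)) : annM A * A = 0 := by
  unfold annM; rw [Matrix.sub_mul, Matrix.one_mul, projM_mul_self A h, sub_self]

lemma projM_mul_projM (A : Matrix (Fin T) n ℝ) (h : IsUnit (Aᵀ * A)) :
    projM A * projM A = projM A := by
  have h2 : projM A * projM A = (projM A * A) * ((Aᵀ * A)⁻¹ * Aᵀ) := by
    unfold projM; simp only [Matrix.mul_assoc]
  rw [h2, projM_mul_self A h]; unfold projM; rw [Matrix.mul_assoc]

end Proj

section Main

variable (Y : Matrix (Fin T) (Fin G) ℝ) (X₁ : Matrix (Fin T) (Fin k₁) ℝ)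
  (X₂ : Matrix (Fin T) (Fin k₂) ℝ)

theorem units_of_rankCond (hrank : RankCond Y X₁ X₂) :
    IsUnit (X₁ᵀ * X₁) ∧ IsUnit ((fromCols X₁ X₂)ᵀ * fromCols X₁ X₂) ∧
    Function.Injective (M1 X₁ * Y).mulVec ∧ Function.Injective (N1 X₁ X₂ * Y).mulVec ∧
    IsUnit ((Ybar Y X₁)ᵀ * Ybar Y X₁) ∧ IsUnit ((Zfull Y X₁ X₂)ᵀ * Zfull Y X₁ X₂) := by
  obtain ⟨h1, h2, h3, h4⟩ := hrank
  have injX1 : Function.Injective X₁.mulVec := mulVec_inj_of_rank X₁ (by simpa using h1)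
  have injX : Function.Injective (fromCols X₁ X₂).mulVec :=
    mulVec_inj_of_rank _ (by simpa using h2)
  have injZ : Function.Injective (Zfull Y X₁ X₂).mulVec :=
    mulVec_inj_of_rank _ (by simpa [Zfull] using h3)
  have injPY : Function.Injective (fromCols (Pm X₁ X₂ * Y) X₁).mulVec :=
    mulVec_inj_of_rank _ (by simpa using h4)
  have uX1 : IsUnit (X₁ᵀ * X₁) := isUnit_gram_of_inj _ injX1
  have uX : IsUnit ((fromCols X₁ X₂)ᵀ * fromCols X₁ X₂) := isUnit_gram_of_inj _ injX
  -- projection facts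
  have eP1X1 : projM X₁ * X₁ = X₁ := projM_mul_self X₁ uX1
  have hM1def : M1 X₁ = 1 - projM X₁ := rfl
  -- injectivity of M1 Y
  have injM1Y : Function.Injective (M1 X₁ * Y).mulVec := by
    apply mulVec_inj_of_ker
    intro c hc
    set d : Fin k₁ → ℝ := ((X₁ᵀ * X₁)⁻¹ * X₁ᵀ) *ᵥ (Y *ᵥ c) with hd
    have hP1 : projM X₁ *ᵥ (Y *ᵥ c) = X₁ *ᵥ d := by
      rw [hd, mulVec_mulVec, mulVec_mulVec]
      unfold projM; simp only [Matrix.mul_assoc, mulVec_mulVec]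
    have hYc : Y *ᵥ c - X₁ *ᵥ d = 0 := by
      rw [← hP1]
      have : (M1 X₁ * Y) *ᵥ c = Y *ᵥ c - projM X₁ *ᵥ (Y *ᵥ c) := by
        rw [← mulVec_mulVec, hM1def, sub_mulVec, one_mulVec, mulVec_mulVec,
          ← mulVec_mulVec]
      rw [← this, hc]
    have hz : Zfull Y X₁ X₂ *ᵥ Sum.elim c (Sum.elim (-d) 0) = 0 := by
      unfold Zfull
      rw [fromCols_mulVec_sumElim, fromCols_mulVec_sumElim, mulVec_zero, add_zero,
        mulVec_neg]
      rw [← sub_eq_add_neg, hYc]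
    have := mulVec_eq_zero_of_inj _ injZ hz
    funext i; exact congrFun this (Sum.inl i)
  -- injectivity of N1 Y
  have injN1Y : Function.Injective (N1 X₁ X₂ * Y).mulVec := by
    apply mulVec_inj_of_ker
    intro c hc
    set d : Fin k₁ → ℝ := ((X₁ᵀ * X₁)⁻¹ * X₁ᵀ) *ᵥ ((Pm X₁ X₂ * Y) *ᵥ c) with hd
    have hP1 : projM X₁ *ᵥ ((Pm X₁ X₂ * Y) *ᵥ c) = X₁ *ᵥ d := by
      rw [hd, mulVec_mulVec, mulVec_mulVec]
      unfold projM; simp only [Matrix.mul_assoc, mulVec_mulVec]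
    have hYc : (Pm X₁ X₂ * Y) *ᵥ c - X₁ *ᵥ d = 0 := by
      rw [← hP1]
      have hsplit : (N1 X₁ X₂ * Y) *ᵥ c
          = (Pm X₁ X₂ * Y) *ᵥ c - projM X₁ *ᵥ ((Pm X₁ X₂ * Y) *ᵥ c) := by
        have : N1 X₁ X₂ * Y = (1 - projM X₁) * (Pm X₁ X₂ * Y) := by
          unfold N1; rw [hM1def, Matrix.mul_assoc]
        rw [this, Matrix.sub_mul, Matrix.one_mul, sub_mulVec]
        simp only [mulVec_mulVec, Matrix.mul_assoc]
      rw [← hsplit, hc]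
    have hz : fromCols (Pm X₁ X₂ * Y) X₁ *ᵥ Sum.elim c (-d) = 0 := by
      rw [fromCols_mulVec_sumElim, mulVec_neg, ← sub_eq_add_neg, hYc]
    have := mulVec_eq_zero_of_inj _ injPY hz
    funext i; exact congrFun this (Sum.inl i)
  -- Ybar
  have injYbar : Function.Injective (Ybar Y X₁).mulVec := by
    apply mulVec_inj_of_ker
    intro v hv
    have hv' : Zfull Y X₁ X₂ *ᵥ Sum.elim (v ∘ Sum.inl) (Sum.elim (v ∘ Sum.inr) 0) = 0 := by
      unfold Zfull
      rw [fromCols_mulVec_sumElim, fromCols_mulVec_sumElim, mulVec_zero, add_zero]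
      have : Ybar Y X₁ *ᵥ v = Y *ᵥ (v ∘ Sum.inl) + X₁ *ᵥ (v ∘ Sum.inr) := by
        unfold Ybar
        conv_lhs => rw [← Sum.elim_comp_inl_inr v]
        rw [fromCols_mulVec_sumElim]
      rw [← this, hv]
    have h0 := mulVec_eq_zero_of_inj _ injZ hv'
    funext i
    cases i with
    | inl i => exact congrFun h0 (Sum.inl i)
    | inr i => exact congrFun h0 (Sum.inr (Sum.inl i))
  exact ⟨uX1, uX, injM1Y, injN1Y, isUnit_gram_of_inj _ injYbar, isUnit_gram_of_inj _ injZ⟩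

end Main

/-- **Invariance-based representation of exogeneity statistics.**  Under the rank
condition, if `y = Yβ + X₁γ + Va + σε` with `σ ≠ 0`, set `ā = a/σ` and
`y*⊥(ā) = M₁(V − Y)ā + M₁ε`.  Then `C₁y = σC₁y*⊥(ā)`, `yᵀΨ₀y = σ²y*⊥(ā)ᵀΨ₀y*⊥(ā)`,
`yᵀΛ_ly = σ²y*⊥(ā)ᵀΛ_ly*⊥(ā)` (`l = 1,…,4`), `yᵀΨ_Ry = σ²y*⊥(ā)ᵀΨ_Ry*⊥(ā)`,
`yᵀΛ_Ry = σ²y*⊥(ā)ᵀΛ_Ry*⊥(ā)`; consequently every exogeneity-statistic ratio computed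
from `y` equals the corresponding ratio computed from `y*⊥(ā)`, so the statistics
depend on `a` only through the shift `M₁(V − Y)ā`. -/
theorem stmt18 {T G k₁ k₂ : ℕ}
    (hT : 0 < T) (hG : 0 < G) (hk₁ : 0 < k₁) (hk₂ : 0 < k₂)
    (y : Fin T → ℝ) (Y : Matrix (Fin T) (Fin G) ℝ)
    (X₁ : Matrix (Fin T) (Fin k₁) ℝ) (X₂ : Matrix (Fin T) (Fin k₂) ℝ)
    (hrank : RankCond Y X₁ X₂)
    (β : Fin G → ℝ) (γ : Fin k₁ → ℝ) (a : Fin G → ℝ)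
    (V : Matrix (Fin T) (Fin G) ℝ) (σ : ℝ) (hσ : σ ≠ 0) (ε : Fin T → ℝ)
    (hy : y = Y *ᵥ β + X₁ *ᵥ γ + V *ᵥ a + σ • ε)
    (w : Fin T → ℝ) (hw : w = (M1 X₁ * (V - Y)) *ᵥ (σ⁻¹ • a) + M1 X₁ *ᵥ ε) :
    C1 Y X₁ X₂ *ᵥ y = σ • (C1 Y X₁ X₂ *ᵥ w) ∧
    y ⬝ᵥ (Psi0 Y X₁ X₂ *ᵥ y) = σ ^ 2 * (w ⬝ᵥ (Psi0 Y X₁ X₂ *ᵥ w)) ∧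
    y ⬝ᵥ (Lam1 Y X₁ X₂ *ᵥ y) = σ ^ 2 * (w ⬝ᵥ (Lam1 Y X₁ X₂ *ᵥ w)) ∧
    y ⬝ᵥ (Lam2 Y X₁ X₂ *ᵥ y) = σ ^ 2 * (w ⬝ᵥ (Lam2 Y X₁ X₂ *ᵥ w)) ∧
    y ⬝ᵥ (Lam3 Y X₁ X₂ *ᵥ y) = σ ^ 2 * (w ⬝ᵥ (Lam3 Y X₁ X₂ *ᵥ w)) ∧
    y ⬝ᵥ (Lam4 Y X₁ *ᵥ y) = σ ^ 2 * (w ⬝ᵥ (Lam4 Y X₁ *ᵥ w)) ∧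
    y ⬝ᵥ (PsiR Y X₁ X₂ *ᵥ y) = σ ^ 2 * (w ⬝ᵥ (PsiR Y X₁ X₂ *ᵥ w)) ∧
    y ⬝ᵥ (LamR Y X₁ X₂ *ᵥ y) = σ ^ 2 * (w ⬝ᵥ (LamR Y X₁ X₂ *ᵥ w)) ∧
    (y ⬝ᵥ (Lam1 Y X₁ X₂ *ᵥ y) ≠ 0 →
      ((k₂ : ℝ) - (G : ℝ)) / (G : ℝ) *
          (y ⬝ᵥ (Psi0 Y X₁ X₂ *ᵥ y) / (y ⬝ᵥ (Lam1 Y X₁ X₂ *ᵥ y)))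
        = ((k₂ : ℝ) - (G : ℝ)) / (G : ℝ) *
            (w ⬝ᵥ (Psi0 Y X₁ X₂ *ᵥ w) / (w ⬝ᵥ (Lam1 Y X₁ X₂ *ᵥ w)))) ∧
    (y ⬝ᵥ (Lam2 Y X₁ X₂ *ᵥ y) ≠ 0 →
      ((T : ℝ) - (k₁ : ℝ) - 2 * (G : ℝ)) / (G : ℝ) *
          (y ⬝ᵥ (Psi0 Y X₁ X₂ *ᵥ y) / (y ⬝ᵥ (Lam2 Y X₁ X₂ *ᵥ y)))
        = ((T : ℝ) - (k₁ : ℝ) - 2 * (G : ℝ)) / (G : ℝ) *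
            (w ⬝ᵥ (Psi0 Y X₁ X₂ *ᵥ w) / (w ⬝ᵥ (Lam2 Y X₁ X₂ *ᵥ w)))) ∧
    (y ⬝ᵥ (Lam3 Y X₁ X₂ *ᵥ y) ≠ 0 →
      ((T : ℝ) - (k₁ : ℝ) - (G : ℝ)) *
          (y ⬝ᵥ (Psi0 Y X₁ X₂ *ᵥ y) / (y ⬝ᵥ (Lam3 Y X₁ X₂ *ᵥ y)))
        = ((T : ℝ) - (k₁ : ℝ) - (G : ℝ)) *
            (w ⬝ᵥ (Psi0 Y X₁ X₂ *ᵥ w) / (w ⬝ᵥ (Lam3 Y X₁ X₂ *ᵥ w)))) ∧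
    (y ⬝ᵥ (Lam4 Y X₁ *ᵥ y) ≠ 0 →
      ((T : ℝ) - (k₁ : ℝ) - (G : ℝ)) *
          (y ⬝ᵥ (Psi0 Y X₁ X₂ *ᵥ y) / (y ⬝ᵥ (Lam4 Y X₁ *ᵥ y)))
        = ((T : ℝ) - (k₁ : ℝ) - (G : ℝ)) *
            (w ⬝ᵥ (Psi0 Y X₁ X₂ *ᵥ w) / (w ⬝ᵥ (Lam4 Y X₁ *ᵥ w)))) ∧
    (y ⬝ᵥ (LamR Y X₁ X₂ *ᵥ y) ≠ 0 →
      ((T : ℝ) - (k₁ : ℝ) - (k₂ : ℝ) - (G : ℝ)) / (k₂ : ℝ) *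
          (y ⬝ᵥ (PsiR Y X₁ X₂ *ᵥ y) / (y ⬝ᵥ (LamR Y X₁ X₂ *ᵥ y)))
        = ((T : ℝ) - (k₁ : ℝ) - (k₂ : ℝ) - (G : ℝ)) / (k₂ : ℝ) *
            (w ⬝ᵥ (PsiR Y X₁ X₂ *ᵥ w) / (w ⬝ᵥ (LamR Y X₁ X₂ *ᵥ w)))) := by
  obtain ⟨uX1, uX, injM1Y, injN1Y, uYb, uZ⟩ := units_of_rankCond Y X₁ X₂ hrank
  set P1 : Matrix (Fin T) (Fin T) ℝ := projM X₁ with hP1def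
  set Pf : Matrix (Fin T) (Fin T) ℝ := projM (fromCols X₁ X₂) with hPfdef
  have eP1X1 : P1 * X₁ = X₁ := projM_mul_self X₁ uX1
  have eP1T : P1ᵀ = P1 := projM_transpose X₁
  have eP1P1 : P1 * P1 = P1 := projM_mul_projM X₁ uX1
  have ePfT : Pfᵀ = Pf := projM_transpose _
  have ePfPf : Pf * Pf = Pf := projM_mul_projM _ uX
  have ePfX : Pf * fromCols X₁ X₂ = fromCols X₁ X₂ := projM_mul_self _ uX
  have ePfX1 : Pf * X₁ = X₁ := by
    have h := ePfX
    rw [mul_fromCols] at h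
    exact ((fromCols_ext_iff _ _ _ _).mp h).1
  have hP1fact : P1 = X₁ * ((X₁ᵀ * X₁)⁻¹ * X₁ᵀ) := by
    rw [hP1def]; unfold projM; rw [Matrix.mul_assoc]
  have ePfP1 : Pf * P1 = P1 := by
    rw [hP1fact, ← Matrix.mul_assoc, ePfX1]
  have eP1Pf : P1 * Pf = P1 := by
    have h := congrArg Matrix.transpose ePfP1
    rwa [transpose_mul, eP1T, ePfT] at h
  have hM1 : M1 X₁ = 1 - P1 := rfl
  have hPm : Pm X₁ X₂ = Pf := rfl
  have hN1 : N1 X₁ X₂ = Pf - P1 := by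
    unfold N1; rw [hM1, hPm, Matrix.sub_mul, Matrix.one_mul, eP1Pf]
  have eM1T : (M1 X₁)ᵀ = M1 X₁ := annM_transpose X₁
  have eM1P1 : M1 X₁ * P1 = 0 := by
    rw [hM1, Matrix.sub_mul, Matrix.one_mul, eP1P1, sub_self]
  have eM1M1 : M1 X₁ * M1 X₁ = M1 X₁ := by
    rw [hM1, Matrix.mul_sub, Matrix.mul_one, Matrix.sub_mul, Matrix.one_mul, eP1P1]
    simp
  have eN1T : (N1 X₁ X₂)ᵀ = N1 X₁ X₂ := by rw [hN1, transpose_sub, ePfT, eP1T]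
  have eN1P1 : N1 X₁ X₂ * P1 = 0 := by
    rw [hN1, Matrix.sub_mul, ePfP1, eP1P1, sub_self]
  have eN1M1 : N1 X₁ X₂ * M1 X₁ = N1 X₁ X₂ := by
    rw [hN1, hM1, Matrix.mul_sub, Matrix.mul_one, Matrix.sub_mul, ePfP1, eP1P1, sub_self,
      sub_zero]
  have eN1N1 : N1 X₁ X₂ * N1 X₁ X₂ = N1 X₁ X₂ := by
    rw [hN1, Matrix.mul_sub, Matrix.sub_mul, Matrix.sub_mul, ePfPf, eP1Pf, ePfP1, eP1P1,
      sub_self, sub_zero]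
  -- gram units
  have gM1Y : IsUnit ((M1 X₁ * Y)ᵀ * (M1 X₁ * Y)) := isUnit_gram_of_inj _ injM1Y
  have gN1Y : IsUnit ((N1 X₁ X₂ * Y)ᵀ * (N1 X₁ X₂ * Y)) := isUnit_gram_of_inj _ injN1Y
  have hYMY : (M1 X₁ * Y)ᵀ * (M1 X₁ * Y) = Yᵀ * M1 X₁ * Y := by
    rw [transpose_mul, eM1T, Matrix.mul_assoc, ← Matrix.mul_assoc (M1 X₁) (M1 X₁) Y,
      eM1M1, ← Matrix.mul_assoc]
  have hYNY : (N1 X₁ X₂ * Y)ᵀ * (N1 X₁ X₂ * Y) = Yᵀ * N1 X₁ X₂ * Y := by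
    rw [transpose_mul, eN1T, Matrix.mul_assoc,
      ← Matrix.mul_assoc (N1 X₁ X₂) (N1 X₁ X₂) Y, eN1N1, ← Matrix.mul_assoc]
  have uYMY : IsUnit (Yᵀ * M1 X₁ * Y) := hYMY ▸ gM1Y
  have uYNY : IsUnit (Yᵀ * N1 X₁ X₂ * Y) := hYNY ▸ gN1Y
  -- B facts
  have eB1M1Y : B1 Y X₁ * (M1 X₁ * Y) = 1 := by
    unfold B1
    rw [Matrix.mul_assoc, Matrix.mul_assoc Yᵀ (M1 X₁) (M1 X₁ * Y),
      ← Matrix.mul_assoc (M1 X₁) (M1 X₁) Y, eM1M1, ← Matrix.mul_assoc Yᵀ (M1 X₁) Y,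
      nonsing_inv_mul _ ((isUnit_iff_isUnit_det _).mp uYMY)]
  have eB2M1Y : B2 Y X₁ X₂ * (M1 X₁ * Y) = 1 := by
    unfold B2
    rw [Matrix.mul_assoc, Matrix.mul_assoc Yᵀ (N1 X₁ X₂) (M1 X₁ * Y),
      ← Matrix.mul_assoc (N1 X₁ X₂) (M1 X₁) Y, eN1M1, ← Matrix.mul_assoc Yᵀ (N1 X₁ X₂) Y,
      nonsing_inv_mul _ ((isUnit_iff_isUnit_det _).mp uYNY)]
  have eB1P1 : B1 Y X₁ * P1 = 0 := by
    unfold B1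
    rw [Matrix.mul_assoc, Matrix.mul_assoc Yᵀ (M1 X₁) P1, eM1P1, Matrix.mul_zero,
      Matrix.mul_zero]
  have eB2P1 : B2 Y X₁ X₂ * P1 = 0 := by
    unfold B2
    rw [Matrix.mul_assoc, Matrix.mul_assoc Yᵀ (N1 X₁ X₂) P1, eN1P1, Matrix.mul_zero,
      Matrix.mul_zero]
  have eC1P1 : C1 Y X₁ X₂ * P1 = 0 := by
    unfold C1; rw [Matrix.sub_mul, eB2P1, eB1P1, sub_self]
  have eC1M1Y : C1 Y X₁ X₂ * (M1 X₁ * Y) = 0 := by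
    unfold C1; rw [Matrix.sub_mul, eB2M1Y, eB1M1Y, sub_self]
  -- annihilator facts
  have eAnnM1Y : annM (M1 X₁ * Y) * (M1 X₁ * Y) = 0 := annM_mul_self _ gM1Y
  have eAnnN1Y : annM (N1 X₁ X₂ * Y) * (N1 X₁ X₂ * Y) = 0 := annM_mul_self _ gN1Y
  have eAnnYb : annM (Ybar Y X₁) * Ybar Y X₁ = 0 := annM_mul_self _ uYb
  have eAnnZ : annM (Zfull Y X₁ X₂) * Zfull Y X₁ X₂ = 0 := annM_mul_self _ uZ
  have hYbsplit : annM (Ybar Y X₁) * Y = 0 ∧ annM (Ybar Y X₁) * X₁ = 0 := by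
    have h := eAnnYb
    rw [show Ybar Y X₁ = fromCols Y X₁ from rfl, mul_fromCols, ← fromCols_zero] at h
    exact ⟨((fromCols_ext_iff _ _ _ _).mp h).1, ((fromCols_ext_iff _ _ _ _).mp h).2⟩
  have hZsplit : annM (Zfull Y X₁ X₂) * Y = 0 ∧ annM (Zfull Y X₁ X₂) * X₁ = 0 := by
    have h := eAnnZ
    rw [show Zfull Y X₁ X₂ = fromCols Y (fromCols X₁ X₂) from rfl, mul_fromCols,
      ← fromCols_zero] at h
    have h1 := ((fromCols_ext_iff _ _ _ _).mp h).1
    have h2 := ((fromCols_ext_iff _ _ _ _).mp h).2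
    rw [mul_fromCols, ← fromCols_zero] at h2
    exact ⟨h1, ((fromCols_ext_iff _ _ _ _).mp h2).1⟩
  have killAnn : ∀ A : Matrix (Fin T) (Fin T) ℝ, A * Y = 0 → A * X₁ = 0 →
      A * P1 = 0 ∧ A * (M1 X₁ * Y) = 0 := by
    intro A hAY hAX1
    have hp : A * P1 = 0 := by rw [hP1fact, ← Matrix.mul_assoc, hAX1, Matrix.zero_mul]
    refine ⟨hp, ?_⟩
    rw [← Matrix.mul_assoc, hM1, Matrix.mul_sub, Matrix.mul_one, hp, sub_zero, hAY]
  -- the shift vector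
  have hyvv : y = σ • w + (P1 *ᵥ y + (M1 X₁ * Y) *ᵥ (β + a)) := by
    have hw' : σ • w = (M1 X₁ * (V - Y)) *ᵥ a + σ • (M1 X₁ *ᵥ ε) := by
      rw [hw, smul_add, mulVec_smul, smul_smul, mul_inv_cancel₀ hσ, one_smul]
    rw [hw']
    conv_lhs => rw [hy]
    conv_rhs => rw [hy]
    simp only [hM1, Matrix.sub_mul, Matrix.mul_sub, Matrix.one_mul, sub_mulVec, add_mulVec,
      one_mulVec, mulVec_add, mulVec_sub, mulVec_smul, smul_add, smul_sub, ← mulVec_mulVec]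
    simp only [mulVec_mulVec, eP1X1]
    abel
  have quad : ∀ A : Matrix (Fin T) (Fin T) ℝ, Aᵀ = A →
      A *ᵥ (P1 *ᵥ y + (M1 X₁ * Y) *ᵥ (β + a)) = 0 →
      y ⬝ᵥ (A *ᵥ y) = σ ^ 2 * (w ⬝ᵥ (A *ᵥ w)) := by
    intro A hs hv
    have hAy : A *ᵥ y = σ • (A *ᵥ w) := by
      conv_lhs => rw [hyvv]
      rw [mulVec_add, hv, add_zero, mulVec_smul]
    rw [hAy]
    conv_lhs => rw [hyvv]
    rw [add_dotProduct, smul_dotProduct, dotProduct_smul, dotProduct_smul]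
    have hz : (P1 *ᵥ y + (M1 X₁ * Y) *ᵥ (β + a)) ⬝ᵥ (A *ᵥ w) = 0 := by
      rw [dotProduct_mulVec, ← mulVec_transpose, hs, hv, zero_dotProduct]
    rw [hz, smul_zero, add_zero, smul_smul, smul_eq_mul]
    ring
  have killv : ∀ A : Matrix (Fin T) (Fin T) ℝ, A * P1 = 0 → A * (M1 X₁ * Y) = 0 →
      A *ᵥ (P1 *ᵥ y + (M1 X₁ * Y) *ᵥ (β + a)) = 0 := by
    intro A h1 h2
    rw [mulVec_add, mulVec_mulVec, mulVec_mulVec, h1, h2, zero_mulVec, zero_mulVec, add_zero]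
  -- Psi0
  have hOmIVT : (OmIV Y X₁ X₂)ᵀ = OmIV Y X₁ X₂ := by
    unfold OmIV
    rw [transpose_smul, transpose_mul, transpose_mul, transpose_transpose, eN1T,
      ← Matrix.mul_assoc]
  have hOmLST : (OmLS Y X₁)ᵀ = OmLS Y X₁ := by
    unfold OmLS
    rw [transpose_smul, transpose_mul, transpose_mul, transpose_transpose, eM1T,
      ← Matrix.mul_assoc]
  have hDinvT : ((Dhat Y X₁ X₂)⁻¹)ᵀ = (Dhat Y X₁ X₂)⁻¹ := by
    rw [transpose_nonsing_inv]
    congr 1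
    unfold Dhat
    rw [transpose_sub, transpose_nonsing_inv, transpose_nonsing_inv, hOmIVT, hOmLST]
  have sPsi0 : (Psi0 Y X₁ X₂)ᵀ = Psi0 Y X₁ X₂ := by
    unfold Psi0
    rw [transpose_mul, transpose_mul, transpose_transpose, hDinvT, ← Matrix.mul_assoc]
  have kPsi0P1 : Psi0 Y X₁ X₂ * P1 = 0 := by
    unfold Psi0; rw [Matrix.mul_assoc, eC1P1, Matrix.mul_zero]
  have kPsi0M1Y : Psi0 Y X₁ X₂ * (M1 X₁ * Y) = 0 := by
    unfold Psi0; rw [Matrix.mul_assoc, eC1M1Y, Matrix.mul_zero]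
  -- Lam1
  have hN1M1Y : N1 X₁ X₂ * (M1 X₁ * Y) = N1 X₁ X₂ * Y := by
    rw [← Matrix.mul_assoc, eN1M1]
  have sLam1 : (Lam1 Y X₁ X₂)ᵀ = Lam1 Y X₁ X₂ := by
    unfold Lam1
    rw [transpose_smul, transpose_mul, transpose_mul, eN1T, annM_transpose, ← Matrix.mul_assoc]
  have kLam1P1 : Lam1 Y X₁ X₂ * P1 = 0 := by
    unfold Lam1
    rw [Matrix.smul_mul,
      Matrix.mul_assoc (N1 X₁ X₂ * annM (N1 X₁ X₂ * Y)) (N1 X₁ X₂) P1, eN1P1,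
      Matrix.mul_zero, smul_zero]
  have kLam1M1Y : Lam1 Y X₁ X₂ * (M1 X₁ * Y) = 0 := by
    unfold Lam1
    rw [Matrix.smul_mul,
      Matrix.mul_assoc (N1 X₁ X₂ * annM (N1 X₁ X₂ * Y)) (N1 X₁ X₂) (M1 X₁ * Y), hN1M1Y,
      Matrix.mul_assoc (N1 X₁ X₂) (annM (N1 X₁ X₂ * Y)) (N1 X₁ X₂ * Y), eAnnN1Y,
      Matrix.mul_zero, smul_zero]
  -- Lam2
  have sLam2 : (Lam2 Y X₁ X₂)ᵀ = Lam2 Y X₁ X₂ := by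
    unfold Lam2
    rw [transpose_mul, transpose_mul, eM1T, transpose_sub, transpose_smul, annM_transpose,
      sPsi0, ← Matrix.mul_assoc]
  have hBM1Y : ((T : ℝ)⁻¹ • annM (M1 X₁ * Y) - Psi0 Y X₁ X₂) * (M1 X₁ * Y) = 0 := by
    rw [Matrix.sub_mul, Matrix.smul_mul, eAnnM1Y, kPsi0M1Y, smul_zero, sub_zero]
  have kLam2P1 : Lam2 Y X₁ X₂ * P1 = 0 := by
    unfold Lam2
    rw [Matrix.mul_assoc (M1 X₁ * ((T : ℝ)⁻¹ • annM (M1 X₁ * Y) - Psi0 Y X₁ X₂)) (M1 X₁) P1,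
      eM1P1, Matrix.mul_zero]
  have kLam2M1Y : Lam2 Y X₁ X₂ * (M1 X₁ * Y) = 0 := by
    unfold Lam2
    rw [Matrix.mul_assoc (M1 X₁ * ((T : ℝ)⁻¹ • annM (M1 X₁ * Y) - Psi0 Y X₁ X₂)) (M1 X₁)
        (M1 X₁ * Y), ← Matrix.mul_assoc (M1 X₁) (M1 X₁) Y, eM1M1,
      Matrix.mul_assoc (M1 X₁) ((T : ℝ)⁻¹ • annM (M1 X₁ * Y) - Psi0 Y X₁ X₂) (M1 X₁ * Y),
      hBM1Y, Matrix.mul_zero]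
  -- Lam3
  have eN2M1Y : N2 Y X₁ X₂ * (M1 X₁ * Y) = 0 := by
    unfold N2
    rw [Matrix.sub_mul, Matrix.one_mul,
      Matrix.mul_assoc (M1 X₁ * Y) (B2 Y X₁ X₂) (M1 X₁ * Y), eB2M1Y, Matrix.mul_one, sub_self]
  have sLam3 : (Lam3 Y X₁ X₂)ᵀ = Lam3 Y X₁ X₂ := by
    unfold Lam3
    rw [transpose_smul]
    congr 1
    simp only [transpose_mul, transpose_transpose, eM1T, Matrix.mul_assoc]
  have kLam3P1 : Lam3 Y X₁ X₂ * P1 = 0 := by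
    unfold Lam3
    rw [Matrix.smul_mul,
      Matrix.mul_assoc (M1 X₁ * (N2 Y X₁ X₂)ᵀ * N2 Y X₁ X₂) (M1 X₁) P1, eM1P1,
      Matrix.mul_zero, smul_zero]
  have kLam3M1Y : Lam3 Y X₁ X₂ * (M1 X₁ * Y) = 0 := by
    unfold Lam3
    rw [Matrix.smul_mul,
      Matrix.mul_assoc (M1 X₁ * (N2 Y X₁ X₂)ᵀ * N2 Y X₁ X₂) (M1 X₁) (M1 X₁ * Y),
      ← Matrix.mul_assoc (M1 X₁) (M1 X₁) Y, eM1M1,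
      Matrix.mul_assoc (M1 X₁ * (N2 Y X₁ X₂)ᵀ) (N2 Y X₁ X₂) (M1 X₁ * Y), eN2M1Y,
      Matrix.mul_zero, smul_zero]
  -- Lam4
  have sLam4 : (Lam4 Y X₁)ᵀ = Lam4 Y X₁ := by
    unfold Lam4
    rw [transpose_smul]
    congr 1
    simp only [transpose_mul, eM1T, annM_transpose, Matrix.mul_assoc]
  have kLam4P1 : Lam4 Y X₁ * P1 = 0 := by
    unfold Lam4
    rw [Matrix.smul_mul, Matrix.mul_assoc (M1 X₁ * annM (M1 X₁ * Y)) (M1 X₁) P1, eM1P1,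
      Matrix.mul_zero, smul_zero]
  have kLam4M1Y : Lam4 Y X₁ * (M1 X₁ * Y) = 0 := by
    unfold Lam4
    rw [Matrix.smul_mul, Matrix.mul_assoc (M1 X₁ * annM (M1 X₁ * Y)) (M1 X₁) (M1 X₁ * Y),
      ← Matrix.mul_assoc (M1 X₁) (M1 X₁) Y, eM1M1,
      Matrix.mul_assoc (M1 X₁) (annM (M1 X₁ * Y)) (M1 X₁ * Y), eAnnM1Y, Matrix.mul_zero,
      smul_zero]
  -- PsiR and LamR
  obtain ⟨kYbP1, kYbM1Y⟩ := killAnn _ hYbsplit.1 hYbsplit.2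
  obtain ⟨kZP1, kZM1Y⟩ := killAnn _ hZsplit.1 hZsplit.2
  have sPsiR : (PsiR Y X₁ X₂)ᵀ = PsiR Y X₁ X₂ := by
    unfold PsiR
    rw [transpose_smul, transpose_sub, annM_transpose, annM_transpose]
  have kPsiRP1 : PsiR Y X₁ X₂ * P1 = 0 := by
    unfold PsiR
    rw [Matrix.smul_mul, Matrix.sub_mul, kYbP1, kZP1, sub_self, smul_zero]
  have kPsiRM1Y : PsiR Y X₁ X₂ * (M1 X₁ * Y) = 0 := by
    unfold PsiR
    rw [Matrix.smul_mul, Matrix.sub_mul, kYbM1Y, kZM1Y, sub_self, smul_zero]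
  have sLamR : (LamR Y X₁ X₂)ᵀ = LamR Y X₁ X₂ := by
    unfold LamR
    rw [transpose_smul, annM_transpose]
  have kLamRP1 : LamR Y X₁ X₂ * P1 = 0 := by
    unfold LamR; rw [Matrix.smul_mul, kZP1, smul_zero]
  have kLamRM1Y : LamR Y X₁ X₂ * (M1 X₁ * Y) = 0 := by
    unfold LamR; rw [Matrix.smul_mul, kZM1Y, smul_zero]
  -- main equalities
  have EC : C1 Y X₁ X₂ *ᵥ y = σ • (C1 Y X₁ X₂ *ᵥ w) := by
    have hkv : C1 Y X₁ X₂ *ᵥ (P1 *ᵥ y + (M1 X₁ * Y) *ᵥ (β + a)) = 0 := by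
      rw [mulVec_add, mulVec_mulVec, mulVec_mulVec, eC1P1, eC1M1Y, zero_mulVec, zero_mulVec,
        add_zero]
    conv_lhs => rw [hyvv]
    rw [mulVec_add, hkv, add_zero, mulVec_smul]
  have EPsi0 := quad _ sPsi0 (killv _ kPsi0P1 kPsi0M1Y)
  have ELam1 := quad _ sLam1 (killv _ kLam1P1 kLam1M1Y)
  have ELam2 := quad _ sLam2 (killv _ kLam2P1 kLam2M1Y)
  have ELam3 := quad _ sLam3 (killv _ kLam3P1 kLam3M1Y)
  have ELam4 := quad _ sLam4 (killv _ kLam4P1 kLam4M1Y)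
  have EPsiR := quad _ sPsiR (killv _ kPsiRP1 kPsiRM1Y)
  have ELamR := quad _ sLamR (killv _ kLamRP1 kLamRM1Y)
  refine ⟨EC, EPsi0, ELam1, ELam2, ELam3, ELam4, EPsiR, ELamR, ?_, ?_, ?_, ?_, ?_⟩
  · intro _
    rw [EPsi0, ELam1, mul_div_mul_left _ _ (pow_ne_zero 2 hσ)]
  · intro _
    rw [EPsi0, ELam2, mul_div_mul_left _ _ (pow_ne_zero 2 hσ)]
  · intro _
    rw [EPsi0, ELam3, mul_div_mul_left _ _ (pow_ne_zero 2 hσ)]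
  · intro _
    rw [EPsi0, ELam4, mul_div_mul_left _ _ (pow_ne_zero 2 hσ)]
  · intro _
    rw [EPsiR, ELamR, mul_div_mul_left _ _ (pow_ne_zero 2 hσ)]
end

section
/- (Flat power under complete non-identification.) Under the rank condition, suppose additionally the linear reduced form Y = X₁Π₁ + X₂Π₂ + V holds for some k₁×G matrix Π₁, k₂×G matrix Π₂ and T×G matrix V, and that y = Yβ + X₁γ + V·a + σ·ε for some β ∈ ℝ^G, γ ∈ ℝ^{k₁}, a ∈ ℝ^G, real σ ≠ 0, and ε ∈ ℝ^T. If M₁X₂Π₂·a = 0 (in particular if Π₂ = 0, i.e., the instruments are totally irrelevant), then, setting y₀ := Yβ + X₁γ + σ·ε, one has C₁y = C₁y₀, yᵀΨ₀y = y₀ᵀΨ₀y₀, yᵀΛ_ly = y₀ᵀΛ_ly₀ for l = 1, 2, 3, 4, yᵀΨ_Ry = y₀ᵀΨ_Ry₀, and yᵀΛ_Ry = y₀ᵀΛ_Ry₀; hence every exogeneity statistic takes exactly the same value at y (endogeneity a ≠ 0) as at y₀ (exogeneity a = 0), so the statistics cannot distinguish the alternative from the null. -/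
open Matrix

variable {T G k₁ k₂ : ℕ}

set_option linter.unusedSectionVars false
namespace FlatAux
open Matrix

variable {T : ℕ} {n : Type*} [Fintype n] [DecidableEq n]

lemma ker_triv_of_rank {A : Matrix (Fin T) n ℝ} (h : A.rank = Fintype.card n) :
    ∀ v, A *ᵥ v = 0 → v = 0 := by
  have h2 := LinearMap.finrank_range_add_finrank_ker A.mulVecLin
  rw [Module.finrank_fintype_fun_eq_card] at h2
  rw [Matrix.rank] at h
  have hker : Module.finrank ℝ (LinearMap.ker A.mulVecLin) = 0 := by omega
  have hbot : LinearMap.ker A.mulVecLin = ⊥ := Submodule.finrank_eq_zero.mp hker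
  intro v hv
  have : v ∈ LinearMap.ker A.mulVecLin := by
    simpa [Matrix.mulVecLin_apply] using hv
  simpa [hbot] using this

lemma isUnit_gram {A : Matrix (Fin T) n ℝ} (h : ∀ v, A *ᵥ v = 0 → v = 0) :
    IsUnit (Aᵀ * A) := by
  rw [← Matrix.mulVec_injective_iff_isUnit]
  have hk : ∀ v, (Aᵀ * A) *ᵥ v = 0 → v = 0 := by
    intro v hv
    apply h
    have h1 : v ⬝ᵥ ((Aᵀ * A) *ᵥ v) = 0 := by rw [hv, dotProduct_zero]
    rw [← Matrix.mulVec_mulVec, dotProduct_mulVec, vecMul_transpose,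
      dotProduct_self_eq_zero] at h1
    exact h1
  intro u v huv
  have : (Aᵀ * A) *ᵥ (u - v) = 0 := by
    rw [Matrix.mulVec_sub, huv, sub_self]
  exact sub_eq_zero.mp (hk _ this)

lemma isUnit_gram_det {A : Matrix (Fin T) n ℝ} (h : IsUnit (Aᵀ * A)) :
    IsUnit (Aᵀ * A).det := (Matrix.isUnit_iff_isUnit_det _).mp h

lemma projM_mul (A : Matrix (Fin T) n ℝ) (h : IsUnit (Aᵀ * A)) :
    projM A * A = A := by
  have hd := isUnit_gram_det h
  unfold projM
  rw [Matrix.mul_assoc, Matrix.mul_assoc, Matrix.nonsing_inv_mul _ hd, Matrix.mul_one]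

lemma annM_mul (A : Matrix (Fin T) n ℝ) (h : IsUnit (Aᵀ * A)) :
    annM A * A = 0 := by
  rw [annM, Matrix.sub_mul, Matrix.one_mul, projM_mul A h, sub_self]

lemma projM_symm (A : Matrix (Fin T) n ℝ) : (projM A)ᵀ = projM A := by
  unfold projM
  rw [Matrix.transpose_mul, Matrix.transpose_mul, Matrix.transpose_nonsing_inv,
    Matrix.transpose_mul, Matrix.transpose_transpose, Matrix.mul_assoc]

lemma annM_symm (A : Matrix (Fin T) n ℝ) : (annM A)ᵀ = annM A := by
  rw [annM, Matrix.transpose_sub, Matrix.transpose_one, projM_symm]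

lemma projM_idem (A : Matrix (Fin T) n ℝ) (h : IsUnit (Aᵀ * A)) :
    projM A * projM A = projM A := by
  nth_rewrite 2 [projM]
  rw [← Matrix.mul_assoc, ← Matrix.mul_assoc, projM_mul A h]
  rfl

lemma annM_idem (A : Matrix (Fin T) n ℝ) (h : IsUnit (Aᵀ * A)) :
    annM A * annM A = annM A := by
  simp only [annM, Matrix.sub_mul, Matrix.mul_sub, Matrix.one_mul, Matrix.mul_one,
    projM_idem A h]
  abel

lemma projM_mulVec (A : Matrix (Fin T) n ℝ) (h : IsUnit (Aᵀ * A)) (v : Fin T → ℝ) :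
    projM A *ᵥ v = A *ᵥ ((Aᵀ * A)⁻¹ *ᵥ (Aᵀ *ᵥ v)) := by
  rw [Matrix.mulVec_mulVec, Matrix.mulVec_mulVec, projM]

lemma quad_eq {Q : Matrix (Fin T) (Fin T) ℝ} {y y₀ d : Fin T → ℝ}
    (h : y = y₀ + d) (h1 : Q *ᵥ d = 0) (h2 : Qᵀ *ᵥ d = 0) :
    y ⬝ᵥ (Q *ᵥ y) = y₀ ⬝ᵥ (Q *ᵥ y₀) := by
  subst h
  have hdQ : d ⬝ᵥ (Q *ᵥ y₀) = 0 := by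
    rw [dotProduct_mulVec, ← Matrix.transpose_transpose Q, vecMul_transpose, h2,
      zero_dotProduct]
  rw [Matrix.mulVec_add, h1, add_zero, add_dotProduct, hdQ, add_zero]

end FlatAux

/-- **Flat power under complete non-identification.**  Under the rank condition, if the
linear reduced form `Y = X₁Pi1 + X₂Pi2 + V` holds, `y = Yβ + X₁γ + Va + σε` with
`σ ≠ 0`, and `M₁X₂Pi2a = 0` (in particular if `Pi2 = 0`), then, with
`y₀ = Yβ + X₁γ + σε`, one has `C₁y = C₁y₀`, `yᵀΨ₀y = y₀ᵀΨ₀y₀`, `yᵀΛ_ly = y₀ᵀΛ_ly₀`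
(`l = 1,…,4`), `yᵀΨ_Ry = y₀ᵀΨ_Ry₀`, `yᵀΛ_Ry = y₀ᵀΛ_Ry₀`; hence every exogeneity
statistic takes exactly the same value at `y` as at `y₀`, so the tests cannot
distinguish the alternative from the null. -/
theorem stmt19 {T G k₁ k₂ : ℕ}
    (hT : 0 < T) (hG : 0 < G) (hk₁ : 0 < k₁) (hk₂ : 0 < k₂)
    (y : Fin T → ℝ) (Y : Matrix (Fin T) (Fin G) ℝ)
    (X₁ : Matrix (Fin T) (Fin k₁) ℝ) (X₂ : Matrix (Fin T) (Fin k₂) ℝ)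
    (hrank : RankCond Y X₁ X₂)
    (Pi1 : Matrix (Fin k₁) (Fin G) ℝ) (Pi2 : Matrix (Fin k₂) (Fin G) ℝ)
    (V : Matrix (Fin T) (Fin G) ℝ)
    (hY : Y = X₁ * Pi1 + X₂ * Pi2 + V)
    (β : Fin G → ℝ) (γ : Fin k₁ → ℝ) (a : Fin G → ℝ) (σ : ℝ) (hσ : σ ≠ 0)
    (ε : Fin T → ℝ)
    (hy : y = Y *ᵥ β + X₁ *ᵥ γ + V *ᵥ a + σ • ε)
    (h0 : (M1 X₁ * X₂ * Pi2) *ᵥ a = 0)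
    (y₀ : Fin T → ℝ) (hy₀ : y₀ = Y *ᵥ β + X₁ *ᵥ γ + σ • ε) :
    C1 Y X₁ X₂ *ᵥ y = C1 Y X₁ X₂ *ᵥ y₀ ∧
    y ⬝ᵥ (Psi0 Y X₁ X₂ *ᵥ y) = y₀ ⬝ᵥ (Psi0 Y X₁ X₂ *ᵥ y₀) ∧
    y ⬝ᵥ (Lam1 Y X₁ X₂ *ᵥ y) = y₀ ⬝ᵥ (Lam1 Y X₁ X₂ *ᵥ y₀) ∧
    y ⬝ᵥ (Lam2 Y X₁ X₂ *ᵥ y) = y₀ ⬝ᵥ (Lam2 Y X₁ X₂ *ᵥ y₀) ∧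
    y ⬝ᵥ (Lam3 Y X₁ X₂ *ᵥ y) = y₀ ⬝ᵥ (Lam3 Y X₁ X₂ *ᵥ y₀) ∧
    y ⬝ᵥ (Lam4 Y X₁ *ᵥ y) = y₀ ⬝ᵥ (Lam4 Y X₁ *ᵥ y₀) ∧
    y ⬝ᵥ (PsiR Y X₁ X₂ *ᵥ y) = y₀ ⬝ᵥ (PsiR Y X₁ X₂ *ᵥ y₀) ∧
    y ⬝ᵥ (LamR Y X₁ X₂ *ᵥ y) = y₀ ⬝ᵥ (LamR Y X₁ X₂ *ᵥ y₀) ∧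
    ((k₂ : ℝ) - (G : ℝ)) / (G : ℝ) *
        (y ⬝ᵥ (Psi0 Y X₁ X₂ *ᵥ y) / (y ⬝ᵥ (Lam1 Y X₁ X₂ *ᵥ y)))
      = ((k₂ : ℝ) - (G : ℝ)) / (G : ℝ) *
          (y₀ ⬝ᵥ (Psi0 Y X₁ X₂ *ᵥ y₀) / (y₀ ⬝ᵥ (Lam1 Y X₁ X₂ *ᵥ y₀))) ∧
    ((T : ℝ) - (k₁ : ℝ) - 2 * (G : ℝ)) / (G : ℝ) *
        (y ⬝ᵥ (Psi0 Y X₁ X₂ *ᵥ y) / (y ⬝ᵥ (Lam2 Y X₁ X₂ *ᵥ y)))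
      = ((T : ℝ) - (k₁ : ℝ) - 2 * (G : ℝ)) / (G : ℝ) *
          (y₀ ⬝ᵥ (Psi0 Y X₁ X₂ *ᵥ y₀) / (y₀ ⬝ᵥ (Lam2 Y X₁ X₂ *ᵥ y₀))) ∧
    ((T : ℝ) - (k₁ : ℝ) - (G : ℝ)) *
        (y ⬝ᵥ (Psi0 Y X₁ X₂ *ᵥ y) / (y ⬝ᵥ (Lam3 Y X₁ X₂ *ᵥ y)))
      = ((T : ℝ) - (k₁ : ℝ) - (G : ℝ)) *
          (y₀ ⬝ᵥ (Psi0 Y X₁ X₂ *ᵥ y₀) / (y₀ ⬝ᵥ (Lam3 Y X₁ X₂ *ᵥ y₀))) ∧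
    ((T : ℝ) - (k₁ : ℝ) - (G : ℝ)) *
        (y ⬝ᵥ (Psi0 Y X₁ X₂ *ᵥ y) / (y ⬝ᵥ (Lam4 Y X₁ *ᵥ y)))
      = ((T : ℝ) - (k₁ : ℝ) - (G : ℝ)) *
          (y₀ ⬝ᵥ (Psi0 Y X₁ X₂ *ᵥ y₀) / (y₀ ⬝ᵥ (Lam4 Y X₁ *ᵥ y₀))) ∧
    ((T : ℝ) - (k₁ : ℝ) - (k₂ : ℝ) - (G : ℝ)) / (k₂ : ℝ) *
        (y ⬝ᵥ (PsiR Y X₁ X₂ *ᵥ y) / (y ⬝ᵥ (LamR Y X₁ X₂ *ᵥ y)))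
      = ((T : ℝ) - (k₁ : ℝ) - (k₂ : ℝ) - (G : ℝ)) / (k₂ : ℝ) *
          (y₀ ⬝ᵥ (PsiR Y X₁ X₂ *ᵥ y₀) / (y₀ ⬝ᵥ (LamR Y X₁ X₂ *ᵥ y₀))) ∧
    (T : ℝ) *
        ((C1 Y X₁ X₂ *ᵥ y) ⬝ᵥ
          (((y ⬝ᵥ (Lam3 Y X₁ X₂ *ᵥ y)) • (OmIV Y X₁ X₂)⁻¹ -
              (y ⬝ᵥ (Lam4 Y X₁ *ᵥ y)) • (OmLS Y X₁)⁻¹)⁻¹ *ᵥ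
            (C1 Y X₁ X₂ *ᵥ y)))
      = (T : ℝ) *
          ((C1 Y X₁ X₂ *ᵥ y₀) ⬝ᵥ
            (((y₀ ⬝ᵥ (Lam3 Y X₁ X₂ *ᵥ y₀)) • (OmIV Y X₁ X₂)⁻¹ -
                (y₀ ⬝ᵥ (Lam4 Y X₁ *ᵥ y₀)) • (OmLS Y X₁)⁻¹)⁻¹ *ᵥ
              (C1 Y X₁ X₂ *ᵥ y₀))) := by
    classical
  obtain ⟨hr1, hr2, hr3, hr4⟩ := hrank
  -- kernel triviality from rank conditions
  have kX1 : ∀ v, X₁ *ᵥ v = 0 → v = 0 :=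
    FlatAux.ker_triv_of_rank (by simpa using hr1)
  have kX : ∀ v, (fromCols X₁ X₂) *ᵥ v = 0 → v = 0 :=
    FlatAux.ker_triv_of_rank (by simpa using hr2)
  have kZ : ∀ v, (fromCols Y (fromCols X₁ X₂)) *ᵥ v = 0 → v = 0 :=
    FlatAux.ker_triv_of_rank (by simpa using hr3)
  have kW : ∀ v, (fromCols (Pm X₁ X₂ * Y) X₁) *ᵥ v = 0 → v = 0 :=
    FlatAux.ker_triv_of_rank (by simpa using hr4)
  -- gram units
  have uX1 : IsUnit (X₁ᵀ * X₁) := FlatAux.isUnit_gram kX1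
  have uX : IsUnit ((fromCols X₁ X₂)ᵀ * fromCols X₁ X₂) := FlatAux.isUnit_gram kX
  have uZ : IsUnit ((fromCols Y (fromCols X₁ X₂))ᵀ * fromCols Y (fromCols X₁ X₂)) :=
    FlatAux.isUnit_gram kZ
  -- Ybar kernel triviality
  have kYb : ∀ v, (fromCols Y X₁) *ᵥ v = 0 → v = 0 := by
    intro v hv
    have hv' : v = Sum.elim (v ∘ Sum.inl) (v ∘ Sum.inr) := by
      funext x; cases x <;> rfl
    rw [hv', fromCols_mulVec_sumElim] at hv
    have hz : (fromCols Y (fromCols X₁ X₂)) *ᵥ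
        Sum.elim (v ∘ Sum.inl) (Sum.elim (v ∘ Sum.inr) (0 : Fin k₂ → ℝ)) = 0 := by
      rw [fromCols_mulVec_sumElim, fromCols_mulVec_sumElim, Matrix.mulVec_zero,
        add_zero, hv]
    have h0' := kZ _ hz
    rw [hv']
    funext x
    cases x with
    | inl i => exact congrFun h0' (Sum.inl i)
    | inr j => exact congrFun h0' (Sum.inr (Sum.inl j))
  have uYb : IsUnit ((fromCols Y X₁)ᵀ * fromCols Y X₁) := FlatAux.isUnit_gram kYb
  -- basic projection facts
  have hM1X1 : M1 X₁ * X₁ = 0 := by rw [M1]; exact FlatAux.annM_mul X₁ uX1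
  have hM1symm : (M1 X₁)ᵀ = M1 X₁ := by rw [M1]; exact FlatAux.annM_symm X₁
  have hM1idem : M1 X₁ * M1 X₁ = M1 X₁ := by rw [M1]; exact FlatAux.annM_idem X₁ uX1
  have hPX : Pm X₁ X₂ * fromCols X₁ X₂ = fromCols X₁ X₂ := by
    rw [Pm]; exact FlatAux.projM_mul _ uX
  rw [Matrix.mul_fromCols] at hPX
  obtain ⟨hPX1, hPX2⟩ := Matrix.fromCols_inj hPX
  have hPsymm : (Pm X₁ X₂)ᵀ = Pm X₁ X₂ := by rw [Pm]; exact FlatAux.projM_symm _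
  have hPidem : Pm X₁ X₂ * Pm X₁ X₂ = Pm X₁ X₂ := by rw [Pm]; exact FlatAux.projM_idem _ uX
  have hP1X1 : projM X₁ * X₁ = X₁ := FlatAux.projM_mul X₁ uX1
  have hP1idem : projM X₁ * projM X₁ = projM X₁ := FlatAux.projM_idem X₁ uX1
  have hPP1 : Pm X₁ X₂ * projM X₁ = projM X₁ := by
    rw [projM, ← Matrix.mul_assoc, ← Matrix.mul_assoc, hPX1]
  have hP1P : projM X₁ * Pm X₁ X₂ = projM X₁ := by
    have h := congrArg Matrix.transpose hPP1
    rwa [Matrix.transpose_mul, hPsymm, FlatAux.projM_symm] at h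
  have hN1eq : N1 X₁ X₂ = Pm X₁ X₂ - projM X₁ := by
    rw [N1, M1, annM, Matrix.sub_mul, Matrix.one_mul, hP1P]
  have hN1symm : (N1 X₁ X₂)ᵀ = N1 X₁ X₂ := by
    rw [hN1eq, Matrix.transpose_sub, hPsymm, FlatAux.projM_symm]
  have hN1X1 : N1 X₁ X₂ * X₁ = 0 := by
    rw [hN1eq, Matrix.sub_mul, hPX1, hP1X1, sub_self]
  have hN1X2 : N1 X₁ X₂ * X₂ = M1 X₁ * X₂ := by
    rw [hN1eq, M1, annM, Matrix.sub_mul, Matrix.sub_mul, Matrix.one_mul, hPX2]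
  have hN1M1 : N1 X₁ X₂ * M1 X₁ = N1 X₁ X₂ := by
    rw [hN1eq, M1, annM]
    simp only [Matrix.mul_sub, Matrix.sub_mul, Matrix.mul_one, hPP1, hP1idem]
    abel
  have hN1idem : N1 X₁ X₂ * N1 X₁ X₂ = N1 X₁ X₂ := by
    rw [hN1eq]
    simp only [Matrix.mul_sub, Matrix.sub_mul, hPidem, hPP1, hP1P, hP1idem]
    abel
  -- gram identities for M1*Y and N1*Y
  have gM1Y : (M1 X₁ * Y)ᵀ * (M1 X₁ * Y) = Yᵀ * M1 X₁ * Y := by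
    rw [Matrix.transpose_mul, hM1symm, Matrix.mul_assoc Yᵀ, ← Matrix.mul_assoc (M1 X₁),
      hM1idem, ← Matrix.mul_assoc]
  have gN1Y : (N1 X₁ X₂ * Y)ᵀ * (N1 X₁ X₂ * Y) = Yᵀ * N1 X₁ X₂ * Y := by
    rw [Matrix.transpose_mul, hN1symm, Matrix.mul_assoc Yᵀ, ← Matrix.mul_assoc (N1 X₁ X₂),
      hN1idem, ← Matrix.mul_assoc]
  -- kernel triviality of M1*Y and N1*Y
  have kM1Y : ∀ v, (M1 X₁ * Y) *ᵥ v = 0 → v = 0 := by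
    intro v hv
    rw [← Matrix.mulVec_mulVec] at hv
    have hYv : Y *ᵥ v = projM X₁ *ᵥ (Y *ᵥ v) := by
      have := hv
      rw [M1, annM, Matrix.sub_mulVec, Matrix.one_mulVec, sub_eq_zero] at this
      exact this
    rw [FlatAux.projM_mulVec X₁ uX1] at hYv
    set w := (X₁ᵀ * X₁)⁻¹ *ᵥ (X₁ᵀ *ᵥ (Y *ᵥ v)) with hw
    have hz : (fromCols Y (fromCols X₁ X₂)) *ᵥ
        Sum.elim v (Sum.elim (-w) (0 : Fin k₂ → ℝ)) = 0 := by
      rw [fromCols_mulVec_sumElim, fromCols_mulVec_sumElim, Matrix.mulVec_zero,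
        add_zero, Matrix.mulVec_neg, ← hYv]
      abel
    have h0' := kZ _ hz
    funext i
    exact congrFun h0' (Sum.inl i)
  have kN1Y : ∀ v, (N1 X₁ X₂ * Y) *ᵥ v = 0 → v = 0 := by
    intro v hv
    have hv2 : (M1 X₁) *ᵥ ((Pm X₁ X₂ * Y) *ᵥ v) = 0 := by
      rw [Matrix.mulVec_mulVec, ← Matrix.mul_assoc]
      rw [N1] at hv
      exact hv
    have hYv : (Pm X₁ X₂ * Y) *ᵥ v = projM X₁ *ᵥ ((Pm X₁ X₂ * Y) *ᵥ v) := by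
      rw [M1, annM, Matrix.sub_mulVec, Matrix.one_mulVec, sub_eq_zero] at hv2
      exact hv2
    rw [FlatAux.projM_mulVec X₁ uX1] at hYv
    set w := (X₁ᵀ * X₁)⁻¹ *ᵥ (X₁ᵀ *ᵥ ((Pm X₁ X₂ * Y) *ᵥ v)) with hw
    have hz : (fromCols (Pm X₁ X₂ * Y) X₁) *ᵥ Sum.elim v (-w) = 0 := by
      rw [fromCols_mulVec_sumElim, Matrix.mulVec_neg, ← hYv]
      abel
    have h0' := kW _ hz
    funext i
    exact congrFun h0' (Sum.inl i)
  have uM1Yg : IsUnit ((M1 X₁ * Y)ᵀ * (M1 X₁ * Y)) := FlatAux.isUnit_gram kM1Y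
  have uN1Yg : IsUnit ((N1 X₁ X₂ * Y)ᵀ * (N1 X₁ X₂ * Y)) := FlatAux.isUnit_gram kN1Y
  have uM1YG : IsUnit (Yᵀ * M1 X₁ * Y) := by rwa [gM1Y] at uM1Yg
  have uN1YG : IsUnit (Yᵀ * N1 X₁ X₂ * Y) := by rwa [gN1Y] at uN1Yg
  have dM1YG : IsUnit (Yᵀ * M1 X₁ * Y).det := (Matrix.isUnit_iff_isUnit_det _).mp uM1YG
  have dN1YG : IsUnit (Yᵀ * N1 X₁ X₂ * Y).det := (Matrix.isUnit_iff_isUnit_det _).mp uN1YG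
  -- B facts
  have hB1Y : B1 Y X₁ * Y = 1 := by
    rw [B1, Matrix.mul_assoc, Matrix.nonsing_inv_mul _ dM1YG]
  have hB2Y : B2 Y X₁ X₂ * Y = 1 := by
    rw [B2, Matrix.mul_assoc, Matrix.nonsing_inv_mul _ dN1YG]
  have hB1M1 : B1 Y X₁ * M1 X₁ = B1 Y X₁ := by
    rw [B1, Matrix.mul_assoc ((Yᵀ * M1 X₁ * Y)⁻¹) (Yᵀ * M1 X₁) (M1 X₁),
      Matrix.mul_assoc Yᵀ (M1 X₁) (M1 X₁), hM1idem]
  have hB2M1 : B2 Y X₁ X₂ * M1 X₁ = B2 Y X₁ X₂ := by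
    rw [B2, Matrix.mul_assoc ((Yᵀ * N1 X₁ X₂ * Y)⁻¹) (Yᵀ * N1 X₁ X₂) (M1 X₁),
      Matrix.mul_assoc Yᵀ (N1 X₁ X₂) (M1 X₁), hN1M1]
  have hC1Y : C1 Y X₁ X₂ * Y = 0 := by
    rw [C1, Matrix.sub_mul, hB1Y, hB2Y, sub_self]
  have hC1M1 : C1 Y X₁ X₂ * M1 X₁ = C1 Y X₁ X₂ := by
    rw [C1, Matrix.sub_mul, hB1M1, hB2M1]
  -- the perturbation d
  set d : Fin T → ℝ := V *ᵥ a with hdd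
  have hyd : y = y₀ + d := by rw [hy, hy₀, hdd]; abel
  have hV : V = Y - X₁ * Pi1 - X₂ * Pi2 := by rw [hY]; abel
  have hM1V : M1 X₁ * V = M1 X₁ * Y - M1 X₁ * X₂ * Pi2 := by
    rw [hV, Matrix.mul_sub, Matrix.mul_sub, ← Matrix.mul_assoc, ← Matrix.mul_assoc,
      hM1X1, Matrix.zero_mul, sub_zero]
  have hM1d : M1 X₁ *ᵥ d = (M1 X₁ * Y) *ᵥ a := by
    rw [hdd, Matrix.mulVec_mulVec, hM1V, Matrix.sub_mulVec, h0, sub_zero]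
  have hN1V : N1 X₁ X₂ * V = N1 X₁ X₂ * Y - M1 X₁ * X₂ * Pi2 := by
    rw [hV, Matrix.mul_sub, Matrix.mul_sub, ← Matrix.mul_assoc, ← Matrix.mul_assoc,
      hN1X1, Matrix.zero_mul, sub_zero, hN1X2]
  have hN1d : N1 X₁ X₂ *ᵥ d = (N1 X₁ X₂ * Y) *ᵥ a := by
    rw [hdd, Matrix.mulVec_mulVec, hN1V, Matrix.sub_mulVec, h0, sub_zero]
  have hB1d : B1 Y X₁ *ᵥ d = a := by
    have e1 : (Yᵀ * M1 X₁) *ᵥ d = (Yᵀ * M1 X₁ * Y) *ᵥ a := by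
      rw [← Matrix.mulVec_mulVec d Yᵀ (M1 X₁), hM1d,
        Matrix.mulVec_mulVec a Yᵀ (M1 X₁ * Y), ← Matrix.mul_assoc]
    rw [B1, ← Matrix.mulVec_mulVec d ((Yᵀ * M1 X₁ * Y)⁻¹) (Yᵀ * M1 X₁), e1,
      Matrix.mulVec_mulVec a ((Yᵀ * M1 X₁ * Y)⁻¹) (Yᵀ * M1 X₁ * Y),
      Matrix.nonsing_inv_mul _ dM1YG, Matrix.one_mulVec]
  have hB2d : B2 Y X₁ X₂ *ᵥ d = a := by
    have e1 : (Yᵀ * N1 X₁ X₂) *ᵥ d = (Yᵀ * N1 X₁ X₂ * Y) *ᵥ a := by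
      rw [← Matrix.mulVec_mulVec d Yᵀ (N1 X₁ X₂), hN1d,
        Matrix.mulVec_mulVec a Yᵀ (N1 X₁ X₂ * Y), ← Matrix.mul_assoc]
    rw [B2, ← Matrix.mulVec_mulVec d ((Yᵀ * N1 X₁ X₂ * Y)⁻¹) (Yᵀ * N1 X₁ X₂), e1,
      Matrix.mulVec_mulVec a ((Yᵀ * N1 X₁ X₂ * Y)⁻¹) (Yᵀ * N1 X₁ X₂ * Y),
      Matrix.nonsing_inv_mul _ dN1YG, Matrix.one_mulVec]
  have hC1d : C1 Y X₁ X₂ *ᵥ d = 0 := by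
    rw [C1, Matrix.sub_mulVec, hB1d, hB2d, sub_self]
  have hC1y : C1 Y X₁ X₂ *ᵥ y = C1 Y X₁ X₂ *ᵥ y₀ := by
    rw [hyd, Matrix.mulVec_add, hC1d, add_zero]
  -- Psi0
  have hPsi0d : Psi0 Y X₁ X₂ *ᵥ d = 0 := by
    rw [Psi0, ← Matrix.mulVec_mulVec, hC1d, Matrix.mulVec_zero]
  have hPsi0td : (Psi0 Y X₁ X₂)ᵀ *ᵥ d = 0 := by
    rw [Psi0, Matrix.transpose_mul, Matrix.transpose_mul, Matrix.transpose_transpose,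
      ← Matrix.mulVec_mulVec d (C1 Y X₁ X₂)ᵀ (((Dhat Y X₁ X₂)⁻¹)ᵀ * C1 Y X₁ X₂),
      ← Matrix.mulVec_mulVec d ((Dhat Y X₁ X₂)⁻¹)ᵀ (C1 Y X₁ X₂), hC1d,
      Matrix.mulVec_zero, Matrix.mulVec_zero]
  have q2 : y ⬝ᵥ (Psi0 Y X₁ X₂ *ᵥ y) = y₀ ⬝ᵥ (Psi0 Y X₁ X₂ *ᵥ y₀) :=
    FlatAux.quad_eq hyd hPsi0d hPsi0td
  -- Lam1
  have hAnnN1Y : annM (N1 X₁ X₂ * Y) * (N1 X₁ X₂ * Y) = 0 := FlatAux.annM_mul _ uN1Yg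
  have hLam1d : Lam1 Y X₁ X₂ *ᵥ d = 0 := by
    rw [Lam1, Matrix.smul_mulVec,
      ← Matrix.mulVec_mulVec d (N1 X₁ X₂ * annM (N1 X₁ X₂ * Y)) (N1 X₁ X₂), hN1d,
      ← Matrix.mulVec_mulVec ((N1 X₁ X₂ * Y) *ᵥ a) (N1 X₁ X₂) (annM (N1 X₁ X₂ * Y)),
      Matrix.mulVec_mulVec a (annM (N1 X₁ X₂ * Y)) (N1 X₁ X₂ * Y), hAnnN1Y,
      Matrix.zero_mulVec, Matrix.mulVec_zero, smul_zero]
  have hLam1symm : (Lam1 Y X₁ X₂)ᵀ = Lam1 Y X₁ X₂ := by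
    rw [Lam1, Matrix.transpose_smul]
    simp only [Matrix.transpose_mul, hN1symm, FlatAux.annM_symm, Matrix.mul_assoc]
  have q3 : y ⬝ᵥ (Lam1 Y X₁ X₂ *ᵥ y) = y₀ ⬝ᵥ (Lam1 Y X₁ X₂ *ᵥ y₀) :=
    FlatAux.quad_eq hyd hLam1d (by rw [hLam1symm]; exact hLam1d)
  -- Lam4
  have hAnnM1Y : annM (M1 X₁ * Y) * (M1 X₁ * Y) = 0 := FlatAux.annM_mul _ uM1Yg
  have hLam4d : Lam4 Y X₁ *ᵥ d = 0 := by
    rw [Lam4, Matrix.smul_mulVec,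
      ← Matrix.mulVec_mulVec d (M1 X₁ * annM (M1 X₁ * Y)) (M1 X₁), hM1d,
      ← Matrix.mulVec_mulVec ((M1 X₁ * Y) *ᵥ a) (M1 X₁) (annM (M1 X₁ * Y)),
      Matrix.mulVec_mulVec a (annM (M1 X₁ * Y)) (M1 X₁ * Y), hAnnM1Y,
      Matrix.zero_mulVec, Matrix.mulVec_zero, smul_zero]
  have hLam4symm : (Lam4 Y X₁)ᵀ = Lam4 Y X₁ := by
    rw [Lam4, Matrix.transpose_smul]
    simp only [Matrix.transpose_mul, hM1symm, FlatAux.annM_symm, Matrix.mul_assoc]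
  have q6 : y ⬝ᵥ (Lam4 Y X₁ *ᵥ y) = y₀ ⬝ᵥ (Lam4 Y X₁ *ᵥ y₀) :=
    FlatAux.quad_eq hyd hLam4d (by rw [hLam4symm]; exact hLam4d)
  -- Lam2
  have hC1M1Y : C1 Y X₁ X₂ * (M1 X₁ * Y) = 0 := by
    rw [← Matrix.mul_assoc, hC1M1, hC1Y]
  have hPsi0M1Ya : Psi0 Y X₁ X₂ *ᵥ ((M1 X₁ * Y) *ᵥ a) = 0 := by
    rw [Psi0, ← Matrix.mulVec_mulVec ((M1 X₁ * Y) *ᵥ a)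
        ((C1 Y X₁ X₂)ᵀ * (Dhat Y X₁ X₂)⁻¹) (C1 Y X₁ X₂),
      Matrix.mulVec_mulVec a (C1 Y X₁ X₂) (M1 X₁ * Y), hC1M1Y, Matrix.zero_mulVec,
      Matrix.mulVec_zero]
  have hPsi0tM1Ya : (Psi0 Y X₁ X₂)ᵀ *ᵥ ((M1 X₁ * Y) *ᵥ a) = 0 := by
    rw [Psi0, Matrix.transpose_mul, Matrix.transpose_mul, Matrix.transpose_transpose,
      ← Matrix.mulVec_mulVec ((M1 X₁ * Y) *ᵥ a) (C1 Y X₁ X₂)ᵀ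
        (((Dhat Y X₁ X₂)⁻¹)ᵀ * C1 Y X₁ X₂),
      ← Matrix.mulVec_mulVec ((M1 X₁ * Y) *ᵥ a) ((Dhat Y X₁ X₂)⁻¹)ᵀ (C1 Y X₁ X₂),
      Matrix.mulVec_mulVec a (C1 Y X₁ X₂) (M1 X₁ * Y), hC1M1Y, Matrix.zero_mulVec,
      Matrix.mulVec_zero, Matrix.mulVec_zero]
  have hLam2d : Lam2 Y X₁ X₂ *ᵥ d = 0 := by
    rw [Lam2, ← Matrix.mulVec_mulVec d
        (M1 X₁ * ((T : ℝ)⁻¹ • annM (M1 X₁ * Y) - Psi0 Y X₁ X₂)) (M1 X₁), hM1d,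
      ← Matrix.mulVec_mulVec ((M1 X₁ * Y) *ᵥ a) (M1 X₁)
        ((T : ℝ)⁻¹ • annM (M1 X₁ * Y) - Psi0 Y X₁ X₂),
      Matrix.sub_mulVec, Matrix.smul_mulVec,
      Matrix.mulVec_mulVec a (annM (M1 X₁ * Y)) (M1 X₁ * Y), hAnnM1Y, Matrix.zero_mulVec,
      smul_zero, hPsi0M1Ya, sub_self, Matrix.mulVec_zero]
  have hLam2td : (Lam2 Y X₁ X₂)ᵀ *ᵥ d = 0 := by
    rw [Lam2, Matrix.transpose_mul, Matrix.transpose_mul, hM1symm, Matrix.transpose_sub,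
      Matrix.transpose_smul, FlatAux.annM_symm,
      ← Matrix.mulVec_mulVec d (M1 X₁)
        (((T : ℝ)⁻¹ • annM (M1 X₁ * Y) - (Psi0 Y X₁ X₂)ᵀ) * M1 X₁),
      ← Matrix.mulVec_mulVec d ((T : ℝ)⁻¹ • annM (M1 X₁ * Y) - (Psi0 Y X₁ X₂)ᵀ) (M1 X₁),
      hM1d, Matrix.sub_mulVec, Matrix.smul_mulVec,
      Matrix.mulVec_mulVec a (annM (M1 X₁ * Y)) (M1 X₁ * Y), hAnnM1Y, Matrix.zero_mulVec,
      smul_zero, hPsi0tM1Ya, sub_self, Matrix.mulVec_zero]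
  have q4 : y ⬝ᵥ (Lam2 Y X₁ X₂ *ᵥ y) = y₀ ⬝ᵥ (Lam2 Y X₁ X₂ *ᵥ y₀) :=
    FlatAux.quad_eq hyd hLam2d hLam2td
  -- Lam3
  have hN2M1Y : N2 Y X₁ X₂ * (M1 X₁ * Y) = 0 := by
    rw [N2, Matrix.sub_mul, Matrix.one_mul, Matrix.mul_assoc (M1 X₁ * Y),
      ← Matrix.mul_assoc (B2 Y X₁ X₂), hB2M1, hB2Y, Matrix.mul_one, sub_self]
  have hLam3d : Lam3 Y X₁ X₂ *ᵥ d = 0 := by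
    rw [Lam3, Matrix.smul_mulVec,
      ← Matrix.mulVec_mulVec d (M1 X₁ * (N2 Y X₁ X₂)ᵀ * N2 Y X₁ X₂) (M1 X₁), hM1d,
      ← Matrix.mulVec_mulVec ((M1 X₁ * Y) *ᵥ a) (M1 X₁ * (N2 Y X₁ X₂)ᵀ) (N2 Y X₁ X₂),
      Matrix.mulVec_mulVec a (N2 Y X₁ X₂) (M1 X₁ * Y), hN2M1Y, Matrix.zero_mulVec,
      Matrix.mulVec_zero, smul_zero]
  have hLam3symm : (Lam3 Y X₁ X₂)ᵀ = Lam3 Y X₁ X₂ := by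
    rw [Lam3, Matrix.transpose_smul]
    simp only [Matrix.transpose_mul, Matrix.transpose_transpose, hM1symm, Matrix.mul_assoc]
  have q5 : y ⬝ᵥ (Lam3 Y X₁ X₂ *ᵥ y) = y₀ ⬝ᵥ (Lam3 Y X₁ X₂ *ᵥ y₀) :=
    FlatAux.quad_eq hyd hLam3d (by rw [hLam3symm]; exact hLam3d)
  -- PsiR and LamR
  have hq0 : M1 X₁ *ᵥ (X₂ *ᵥ (Pi2 *ᵥ a)) = 0 := by
    rw [Matrix.mulVec_mulVec, Matrix.mulVec_mulVec]
    exact h0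
  have hqP : X₂ *ᵥ (Pi2 *ᵥ a) = projM X₁ *ᵥ (X₂ *ᵥ (Pi2 *ᵥ a)) := by
    rw [M1, annM, Matrix.sub_mulVec, Matrix.one_mulVec, sub_eq_zero] at hq0
    exact hq0
  rw [FlatAux.projM_mulVec X₁ uX1] at hqP
  set w : Fin k₁ → ℝ := (X₁ᵀ * X₁)⁻¹ *ᵥ (X₁ᵀ *ᵥ (X₂ *ᵥ (Pi2 *ᵥ a))) with hw
  have hdY : d = Y *ᵥ a - X₁ *ᵥ (Pi1 *ᵥ a) - X₂ *ᵥ (Pi2 *ᵥ a) := by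
    rw [hdd, hV, Matrix.sub_mulVec, Matrix.sub_mulVec, ← Matrix.mulVec_mulVec,
      ← Matrix.mulVec_mulVec]
  have hdYb : d = fromCols Y X₁ *ᵥ Sum.elim a (-(Pi1 *ᵥ a) - w) := by
    rw [fromCols_mulVec_sumElim, Matrix.mulVec_sub, Matrix.mulVec_neg, hdY, hqP]
    abel
  have hdZ : d = fromCols Y (fromCols X₁ X₂) *ᵥ
      Sum.elim a (Sum.elim (-(Pi1 *ᵥ a)) (-(Pi2 *ᵥ a))) := by
    rw [fromCols_mulVec_sumElim, fromCols_mulVec_sumElim, Matrix.mulVec_neg,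
      Matrix.mulVec_neg, hdY]
    abel
  have hAnnYb : annM (fromCols Y X₁) *ᵥ d = 0 := by
    rw [hdYb, Matrix.mulVec_mulVec, FlatAux.annM_mul _ uYb, Matrix.zero_mulVec]
  have hAnnZ : annM (fromCols Y (fromCols X₁ X₂)) *ᵥ d = 0 := by
    rw [hdZ, Matrix.mulVec_mulVec, FlatAux.annM_mul _ uZ, Matrix.zero_mulVec]
  have hPsiRd : PsiR Y X₁ X₂ *ᵥ d = 0 := by
    rw [PsiR, Ybar, Zfull, Matrix.smul_mulVec, Matrix.sub_mulVec, hAnnYb, hAnnZ,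
      sub_self, smul_zero]
  have hPsiRsymm : (PsiR Y X₁ X₂)ᵀ = PsiR Y X₁ X₂ := by
    rw [PsiR, Matrix.transpose_smul, Matrix.transpose_sub, FlatAux.annM_symm,
      FlatAux.annM_symm]
  have q7 : y ⬝ᵥ (PsiR Y X₁ X₂ *ᵥ y) = y₀ ⬝ᵥ (PsiR Y X₁ X₂ *ᵥ y₀) :=
    FlatAux.quad_eq hyd hPsiRd (by rw [hPsiRsymm]; exact hPsiRd)
  have hLamRd : LamR Y X₁ X₂ *ᵥ d = 0 := by
    rw [LamR, Zfull, Matrix.smul_mulVec, hAnnZ, smul_zero]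
  have hLamRsymm : (LamR Y X₁ X₂)ᵀ = LamR Y X₁ X₂ := by
    rw [LamR, Matrix.transpose_smul, FlatAux.annM_symm]
  have q8 : y ⬝ᵥ (LamR Y X₁ X₂ *ᵥ y) = y₀ ⬝ᵥ (LamR Y X₁ X₂ *ᵥ y₀) :=
    FlatAux.quad_eq hyd hLamRd (by rw [hLamRsymm]; exact hLamRd)
  exact ⟨hC1y, q2, q3, q4, q5, q6, q7, q8,
    by rw [q2, q3], by rw [q2, q4], by rw [q2, q5], by rw [q2, q6],
    by rw [q7, q8], by rw [hC1y, q5, q6]⟩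
end
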